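/- Let Γ₁ and Γ₂ be finite connected graphs that are not bipartite (each contains an odd closed walk). Then the tensor (categorical) product graph Γ₁ × Γ₂ is connected. -/

import Mathlib

/-- The tensor (categorical) product of two simple graphs: `(u₁, u₂) ~ (v₁, v₂)`
iff `u₁ ~ v₁` and `u₂ ~ v₂`. -/
def tensorProd {V₁ V₂ : Type*} (G₁ : SimpleGraph V₁) (G₂ : SimpleGraph V₂) :
    SimpleGraph (V₁ × V₂) where
  Adj u v := G₁.Adj u.1 v.1 ∧ G₂.Adj u.2 v.2
  symm := ⟨fun _ _ h => ⟨h.1.symm, h.2.symm⟩⟩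
  loopless := ⟨fun u h => G₁.loopless.irrefl u.1 h.1⟩

/-- pair walks of equal length into a tensor-product walk -/
lemma tensor_walk {V₁ V₂ : Type*} {G₁ : SimpleGraph V₁} {G₂ : SimpleGraph V₂} :
    ∀ {a c : V₁} {d : V₂} (p : G₁.Walk a c) {b : V₂} (q : G₂.Walk b d),
      p.length = q.length → Nonempty ((tensorProd G₁ G₂).Walk (a, b) (c, d)) := by
  intro a c d p
  induction p with
  | nil =>
    intro b q hq
    cases q with
    | nil => exact ⟨SimpleGraph.Walk.nil⟩
    | cons h q => simp at hq
  | cons h p ih =>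
    intro b q hq
    cases q with
    | nil => simp at hq
    | cons h' q =>
      simp only [SimpleGraph.Walk.length_cons, Nat.add_right_cancel_iff] at hq
      obtain ⟨w⟩ := ih q hq
      exact ⟨SimpleGraph.Walk.cons ⟨h, h'⟩ w⟩

lemma exists_neighbor {V : Type*} {G : SimpleGraph V} (hc : G.Connected)
    {x y : V} (hxy : G.Adj x y) (u : V) : ∃ w, G.Adj u w := by
  obtain ⟨p⟩ := hc u x
  cases p with
  | nil => exact ⟨y, hxy⟩
  | cons h _ => exact ⟨_, h⟩

lemma walk_add_two {V : Type*} {G : SimpleGraph V} {u v w : V}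
    (h : G.Adj u w) (p : G.Walk u v) :
    ∃ q : G.Walk u v, q.length = p.length + 2 := by
  refine ⟨SimpleGraph.Walk.cons h (SimpleGraph.Walk.cons h.symm p), by simp⟩

lemma walk_add_even {V : Type*} {G : SimpleGraph V} (hc : G.Connected)
    {x y : V} (hxy : G.Adj x y) {u v : V} (p : G.Walk u v) (k : ℕ) :
    ∃ q : G.Walk u v, q.length = p.length + 2 * k := by
  induction k with
  | zero => exact ⟨p, by simp⟩
  | succ n ih =>
    obtain ⟨q, hq⟩ := ih
    obtain ⟨w, hw⟩ := exists_neighbor hc hxy u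
    obtain ⟨r, hr⟩ := walk_add_two hw q
    exact ⟨r, by omega⟩

/-- In a connected non-bipartite graph, walks of every sufficiently large length exist. -/
lemma exists_long_walks {V : Type*} {G : SimpleGraph V} (hc : G.Connected)
    (hodd : ∃ (v : V) (w : G.Walk v v), Odd w.length) (u v : V) :
    ∃ N, ∀ n ≥ N, ∃ p : G.Walk u v, p.length = n := by
  obtain ⟨x, c, hcodd⟩ := hodd
  have hxy : ∃ y, G.Adj x y := by
    cases c with
    | nil => simp at hcodd
    | cons h _ => exact ⟨_, h⟩
  obtain ⟨y, hxy⟩ := hxy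
  obtain ⟨p₀⟩ := hc u v
  obtain ⟨r⟩ := hc u x
  set p₁ : G.Walk u v := (r.append c).append (r.reverse.append p₀) with hp₁
  have hlen : p₁.length = p₀.length + c.length + 2 * r.length := by
    simp [hp₁]; ring
  obtain ⟨t, ht⟩ := hcodd
  refine ⟨p₁.length, fun n hn => ?_⟩
  by_cases hpar : n % 2 = p₀.length % 2
  · have hk : ∃ k, n = p₀.length + 2 * k := ⟨(n - p₀.length) / 2, by omega⟩
    obtain ⟨k, hk⟩ := hk
    obtain ⟨q, hq⟩ := walk_add_even hc hxy p₀ k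
    exact ⟨q, by omega⟩
  · have hk : ∃ k, n = p₁.length + 2 * k := ⟨(n - p₁.length) / 2, by omega⟩
    obtain ⟨k, hk⟩ := hk
    obtain ⟨q, hq⟩ := walk_add_even hc hxy p₁ k
    exact ⟨q, by omega⟩

theorem stmt_19 {V₁ V₂ : Type*} [Finite V₁] [Finite V₂]
    (G₁ : SimpleGraph V₁) (G₂ : SimpleGraph V₂)
    (h₁ : G₁.Connected) (h₂ : G₂.Connected)
    (hodd₁ : ∃ (v : V₁) (w : G₁.Walk v v), Odd w.length)
    (hodd₂ : ∃ (v : V₂) (w : G₂.Walk v v), Odd w.length) :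
    (tensorProd G₁ G₂).Connected := by
  have hne : Nonempty (V₁ × V₂) := ⟨h₁.nonempty.some, h₂.nonempty.some⟩
  rw [SimpleGraph.connected_iff]
  refine ⟨?_, hne⟩
  rintro ⟨a, b⟩ ⟨c, d⟩
  obtain ⟨N₁, hN₁⟩ := exists_long_walks h₁ hodd₁ a c
  obtain ⟨N₂, hN₂⟩ := exists_long_walks h₂ hodd₂ b d
  obtain ⟨w₁, hw₁⟩ := hN₁ (N₁ + N₂) (by omega)
  obtain ⟨w₂, hw₂⟩ := hN₂ (N₁ + N₂) (by omega)
  obtain ⟨w⟩ := tensor_walk w₁ w₂ (by omega)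
  exact ⟨w⟩
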